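/- Boundedness of the scaled residual after QNMF shrinkage (the Lagrange multiplier bound of Algorithm 1): let λ > 0, β > 0, α > 0, let W be an m×n quaternion matrix with decomposition W = U * D(σ) * Vᴴ where U, V are unitary quaternion matrices and σ ∈ ℝ^M (M = min(m,n)) satisfies σ₁ ≥ … ≥ σ_M ≥ 0, and let Z = U * D(S_{λ/β,α}(σ)) * Vᴴ, where S_{λ/β,α} is the QNMF shrinkage with threshold λ/β. Then ‖β·(W − Z)‖_F ≤ λ·√M. -/

import Mathlib

open Matrix BigOperators Filter

noncomputable section

abbrev Quat := Quaternion ℝ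

def IsQUnitary {k : ℕ} (U : Matrix (Fin k) (Fin k) Quat) : Prop :=
  Uᴴ * U = 1 ∧ U * Uᴴ = 1

def Dmat {m n : ℕ} (s : Fin (min m n) → ℝ) : Matrix (Fin m) (Fin n) Quat :=
  fun i j =>
    if h : (i : ℕ) = (j : ℕ) then
      ((s ⟨(i : ℕ), by have h1 := i.isLt; have h2 := j.isLt; omega⟩ : ℝ) : Quat)
    else 0

def frob {m n : ℕ} (A : Matrix (Fin m) (Fin n) Quat) : ℝ :=
  Real.sqrt (∑ i, ∑ j, ‖A i j‖ ^ 2)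

def Sshrink {M : ℕ} (lam alph : ℝ) (σ : Fin M → ℝ) : Fin M → ℝ :=
  let z : Fin M → ℝ := fun i => if lam < σ i then σ i - lam / 2 else 0
  let nz : ℝ := Real.sqrt (∑ i, z i ^ 2)
  if nz = 0 then fun _ => 0
  else
    let K : ℝ := 1 + alph * lam / (2 * nz)
    fun i =>
      if K * lam / (2 * (K - 1)) < σ i then σ i
      else if lam < σ i then K * (σ i - lam / 2)
      else 0

open Classical in
def softQ (t : ℝ) (q : Quat) : Quat :=
  if q = 0 then 0 else (max (‖q‖ - t) 0 / ‖q‖) • q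

def qinner {m n : ℕ} (P Q : Matrix (Fin m) (Fin n) Quat) : ℝ :=
  ∑ i, ∑ j, (star (P i j) * Q i j).re

lemma re_sum {ι : Type*} (s : Finset ι) (f : ι → Quat) :
    (∑ i ∈ s, f i).re = ∑ i ∈ s, (f i).re := by
  induction s using Finset.cons_induction with
  | empty => simp; rfl
  | cons a s ha ih => simp [Finset.sum_cons, ih]

lemma re_mul_comm (a b : Quat) : (a * b).re = (b * a).re := by
  simp only [Quaternion.re_mul]; ring

lemma norm_sq_eq (q : Quat) : ‖q‖ ^ 2 = (star q * q).re := by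
  rw [Quaternion.star_mul_self, Quaternion.re_coe, Quaternion.normSq_eq_norm_mul_self, sq]

lemma qinner_eq {m n : ℕ} (P Q : Matrix (Fin m) (Fin n) Quat) :
    qinner P Q = ((Pᴴ * Q).trace).re := by
  unfold qinner Matrix.trace
  simp only [Matrix.diag, Matrix.mul_apply, Matrix.conjTranspose_apply, re_sum]
  exact Finset.sum_comm

lemma retrace_comm {m n : ℕ} (X : Matrix (Fin m) (Fin n) Quat)
    (Y : Matrix (Fin n) (Fin m) Quat) : ((X * Y).trace).re = ((Y * X).trace).re := by
  unfold Matrix.trace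
  simp only [Matrix.diag, Matrix.mul_apply, re_sum]
  rw [Finset.sum_comm]
  exact Finset.sum_congr rfl fun i _ => Finset.sum_congr rfl fun j _ => re_mul_comm _ _

lemma qinner_unitary {m n : ℕ} (U : Matrix (Fin m) (Fin m) Quat)
    (V : Matrix (Fin n) (Fin n) Quat) (hU : Uᴴ * U = 1) (hV : Vᴴ * V = 1)
    (A : Matrix (Fin m) (Fin n) Quat) :
    qinner (U * A * Vᴴ) (U * A * Vᴴ) = qinner A A := by
  rw [qinner_eq, qinner_eq]
  have h1 : (U * A * Vᴴ)ᴴ * (U * A * Vᴴ) = V * ((Aᴴ * A) * Vᴴ) := by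
    simp only [Matrix.conjTranspose_mul, Matrix.conjTranspose_conjTranspose]
    calc V * (Aᴴ * Uᴴ) * (U * A * Vᴴ) = V * (Aᴴ * ((Uᴴ * U) * (A * Vᴴ))) := by
          simp only [Matrix.mul_assoc]
      _ = V * ((Aᴴ * A) * Vᴴ) := by rw [hU, Matrix.one_mul, Matrix.mul_assoc]
  rw [h1, retrace_comm, Matrix.mul_assoc, hV, Matrix.mul_one]

lemma frob_eq_qinner {m n : ℕ} (A : Matrix (Fin m) (Fin n) Quat) :
    frob A = Real.sqrt (qinner A A) := by
  unfold frob qinner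
  congr 1
  exact Finset.sum_congr rfl fun i _ => Finset.sum_congr rfl fun j _ => norm_sq_eq _

lemma qinner_Dmat {m n : ℕ} (s : Fin (min m n) → ℝ) :
    qinner (Dmat s) (Dmat s) = ∑ k, s k ^ 2 := by
  unfold qinner
  have hterm : ∀ (i : Fin m) (j : Fin n),
      (star (Dmat s i j) * Dmat s i j).re =
        if h : (i : ℕ) = (j : ℕ) then
          (s ⟨(i : ℕ), by have := i.isLt; have := j.isLt; omega⟩) ^ 2 else 0 := by
    intro i j
    unfold Dmat
    by_cases h : (i : ℕ) = (j : ℕ)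
    · simp only [h, dif_pos]
      rw [Quaternion.star_coe, ← Quaternion.coe_mul, Quaternion.re_coe]
      ring_nf
    · simp [h]; rfl
  simp only [hterm]
  have hinner : ∀ i : Fin m, (∑ j : Fin n, if h : (i : ℕ) = (j : ℕ) then
        (s ⟨(i : ℕ), by have := i.isLt; have := j.isLt; omega⟩) ^ 2 else 0) =
      if h : (i : ℕ) < n then (s ⟨(i : ℕ), lt_min i.isLt h⟩) ^ 2 else 0 := by
    intro i
    by_cases h : (i : ℕ) < n
    · rw [dif_pos h, Finset.sum_eq_single (⟨(i : ℕ), h⟩ : Fin n)]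
      · simp
      · intro j _ hj
        rw [dif_neg]
        intro hij
        exact hj (Fin.ext hij.symm)
      · simp
    · rw [dif_neg h]
      apply Finset.sum_eq_zero
      intro j _
      rw [dif_neg]
      intro hij
      exact h (hij ▸ j.isLt)
  simp only [hinner]
  have hrhs : ∑ k : Fin (min m n), s k ^ 2 =
      ∑ i ∈ Finset.univ.map (Fin.castLEEmb (min_le_left m n)),
        (if h : (i : ℕ) < n then (s ⟨(i : ℕ), lt_min i.isLt h⟩) ^ 2 else 0) := by
    rw [Finset.sum_map]
    apply Finset.sum_congr rfl
    intro k _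
    have hk : ((Fin.castLEEmb (min_le_left m n) k : Fin m) : ℕ) = (k : ℕ) := rfl
    rw [dif_pos (hk ▸ lt_of_lt_of_le k.isLt (min_le_right m n))]
    congr 1
  rw [hrhs]
  apply (Finset.sum_subset (Finset.subset_univ _) _).symm
  intro i _ hi
  rw [dif_neg]
  intro h
  apply hi
  simp only [Finset.mem_map, Finset.mem_univ, true_and]
  exact ⟨⟨(i : ℕ), lt_min i.isLt h⟩, by ext; simp [Fin.castLEEmb]⟩

def Sshrink' {M : ℕ} (lam alph : ℝ) (σ : Fin M → ℝ) : Fin M → ℝ :=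
  let z : Fin M → ℝ := fun i => if lam < σ i then σ i - lam / 2 else 0
  let nz : ℝ := Real.sqrt (∑ i, z i ^ 2)
  if nz = 0 then fun _ => 0
  else
    let K : ℝ := 1 + alph * lam / (2 * nz)
    fun i =>
      if K * lam / (2 * (K - 1)) < σ i then σ i
      else if lam < σ i then K * (σ i - lam / 2)
      else 0

lemma shrink_bound {M : ℕ} {t alph : ℝ} (ht : 0 < t) (halph : 0 < alph)
    (σ : Fin M → ℝ) (hnn : ∀ i, 0 ≤ σ i) (i : Fin M) :
    0 ≤ σ i - Sshrink' t alph σ i ∧ σ i - Sshrink' t alph σ i ≤ t := by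
  have hσt : Real.sqrt (∑ j, (if t < σ j then σ j - t / 2 else 0) ^ 2) = 0 → σ i ≤ t := by
    intro h0
    by_contra hlt
    push_neg at hlt
    have hsum : ∑ j, (if t < σ j then σ j - t / 2 else 0) ^ 2 = 0 :=
      (Real.sqrt_eq_zero (by positivity)).mp h0
    have hz := (Finset.sum_eq_zero_iff_of_nonneg (fun j _ => sq_nonneg _)).mp hsum i
      (Finset.mem_univ i)
    rw [if_pos hlt] at hz
    nlinarith
  simp only [Sshrink', ite_apply]
  split_ifs with h0 h1 h2
  · have := hσt h0
    exact ⟨by simpa using hnn i, by simpa using this⟩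
  · simp [ht.le]
  · -- nz ≠ 0, t < σ i ≤ K t/(2(K-1))
    have hnz0 : 0 < Real.sqrt (∑ j, (if t < σ j then σ j - t / 2 else 0) ^ 2) :=
      (Real.sqrt_nonneg _).lt_of_ne' h0
    set nz := Real.sqrt (∑ j, (if t < σ j then σ j - t / 2 else 0) ^ 2) with hnzdef
    set K : ℝ := 1 + alph * t / (2 * nz) with hKdef
    have hK1 : 0 < K - 1 := by
      rw [hKdef]; have : 0 < alph * t / (2 * nz) := by positivity
      linarith
    push_neg at h1
    rw [le_div_iff₀ (by linarith : (0:ℝ) < 2 * (K - 1))] at h1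
    clear_value nz K
    constructor
    · nlinarith
    · nlinarith
  · push_neg at h2
    exact ⟨by simpa using hnn i, by simpa using h2⟩

lemma Sshrink_eq {M : ℕ} (lam alph : ℝ) (σ : Fin M → ℝ) :
    Sshrink lam alph σ = Sshrink' lam alph σ := rfl

lemma Dmat_sub {m n : ℕ} (a b : Fin (min m n) → ℝ) :
    Dmat (m := m) (n := n) a - Dmat b = Dmat (fun k => a k - b k) := by
  apply Matrix.ext
  intro i j
  rw [Matrix.sub_apply]
  unfold Dmat
  by_cases h : (i : ℕ) = (j : ℕ) <;>
    simp [h, Matrix.sub_apply, Pi.sub_apply, Quaternion.coe_sub]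

lemma Dmat_smul {m n : ℕ} (c : ℝ) (a : Fin (min m n) → ℝ) :
    c • Dmat (m := m) (n := n) a = Dmat (fun k => c * a k) := by
  apply Matrix.ext
  intro i j
  rw [Matrix.smul_apply]
  unfold Dmat
  by_cases h : (i : ℕ) = (j : ℕ) <;>
    simp [h, Matrix.smul_apply, Pi.smul_apply, Quaternion.smul_coe]

theorem qnmf_multiplier_bound (m n : ℕ) (lam bet alph : ℝ)
    (hlam : 0 < lam) (hbet : 0 < bet) (halph : 0 < alph)
    (W : Matrix (Fin m) (Fin n) Quat)
    (U : Matrix (Fin m) (Fin m) Quat) (V : Matrix (Fin n) (Fin n) Quat)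
    (σ : Fin (min m n) → ℝ)
    (hU : IsQUnitary U) (hV : IsQUnitary V)
    (hmono : Antitone σ) (hnn : ∀ i, 0 ≤ σ i)
    (hW : W = U * Dmat σ * Vᴴ)
    (Z : Matrix (Fin m) (Fin n) Quat)
    (hZ : Z = U * Dmat (Sshrink (lam / bet) alph σ) * Vᴴ) :
    frob (bet • (W - Z)) ≤ lam * Real.sqrt (min m n) := by
  have ht : 0 < lam / bet := div_pos hlam hbet
  set S : Fin (min m n) → ℝ := Sshrink (lam / bet) alph σ with hSdef
  have hd : ∀ k, 0 ≤ σ k - S k ∧ σ k - S k ≤ lam / bet := by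
    intro k
    rw [hSdef, Sshrink_eq]
    exact shrink_bound ht halph σ hnn k
  have hmat : bet • (W - Z) = U * Dmat (fun k => bet * (σ k - S k)) * Vᴴ := by
    rw [hW, hZ, ← Matrix.sub_mul, ← Matrix.mul_sub, Dmat_sub, ← Dmat_smul,
      Matrix.mul_smul, Matrix.smul_mul]
  rw [hmat, frob_eq_qinner, qinner_unitary U V hU.1 hV.1, qinner_Dmat]
  have hbound : ∑ k : Fin (min m n), (bet * (σ k - S k)) ^ 2 ≤
      ∑ _k : Fin (min m n), lam ^ 2 := by
    apply Finset.sum_le_sum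
    intro k _
    have h1 := (hd k).1
    have h2 := (hd k).2
    have hle : bet * (σ k - S k) ≤ lam := by
      calc bet * (σ k - S k) ≤ bet * (lam / bet) := by nlinarith
        _ = lam := by field_simp
    exact pow_le_pow_left₀ (mul_nonneg hbet.le h1) hle 2
  calc Real.sqrt (∑ k : Fin (min m n), (bet * (σ k - S k)) ^ 2)
      ≤ Real.sqrt (∑ _k : Fin (min m n), lam ^ 2) := Real.sqrt_le_sqrt hbound
    _ = lam * Real.sqrt (min m n) := by
        rw [Finset.sum_const, Finset.card_univ, Fintype.card_fin, nsmul_eq_mul,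
          Real.sqrt_mul (Nat.cast_nonneg _), Real.sqrt_sq hlam.le, mul_comm,
          Nat.cast_min]
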